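/- Let G be the circuit of pairwise disjoint connected graphs G_1, …, G_n with respect to vertices x_i ∈ V(G_i), obtained by identifying x_i with the i-th vertex of the cycle C_n. If n = 2t is even, then Mo(G) ≤ Σ_{i=1}^{n} Mo(G_i) + Σ_{i=1}^{n} |E(G_i)|·(|V(G)| − |V(G_i)|) + n·Σ_{i=1}^{t} | |V(G_i)| − |V(G_{t+i})| |; if n = 2t−1 is odd, then Mo(G) ≤ Σ_{i=1}^{n} Mo(G_i) + Σ_{i=1}^{n} |E(G_i)|·(|V(G)| − |V(G_i)|) + (n−1)·|V(G)|. -/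

import Mathlib

open Finset SimpleGraph

section MostarDefs

variable {V : Type*}

/-- Number of vertices of `G` strictly closer to `u` than to `v`. -/
noncomputable def closerCount (G : SimpleGraph V) (u v : V) : ℕ :=
  Nat.card {w : V // G.dist w u < G.dist w v}

/-- Contribution `|n_u - n_v|` of an edge, as a symmetric function on `Sym2 V`. -/
noncomputable def mostarTerm (G : SimpleGraph V) : Sym2 V → ℕ :=
  Sym2.lift ⟨fun u v => ((closerCount G u v : ℤ) - closerCount G v u).natAbs,
    fun u v => by dsimp only; omega⟩

/-- The Mostar index of a finite graph. -/
noncomputable def mostar (G : SimpleGraph V) [Finite V] : ℕ :=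
  letI := Fintype.ofFinite V
  letI := Classical.decEq V
  letI := Classical.decRel G.Adj
  ∑ e ∈ G.edgeFinset, mostarTerm G e

/-- Distance from a vertex `w` to an edge, as min over the endpoints. -/
noncomputable def vertexEdgeDist (G : SimpleGraph V) (w : V) : Sym2 V → ℕ :=
  Sym2.lift ⟨fun x y => min (G.dist x w) (G.dist y w), fun _ _ => min_comm _ _⟩

/-- Number of edges of `G` strictly closer to `u` than to `v`. -/
noncomputable def edgeCloserCount (G : SimpleGraph V) (u v : V) : ℕ :=
  Nat.card {e : Sym2 V // e ∈ G.edgeSet ∧ vertexEdgeDist G u e < vertexEdgeDist G v e}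

/-- Contribution `|m_u - m_v|` of an edge, as a symmetric function on `Sym2 V`. -/
noncomputable def emostarTerm (G : SimpleGraph V) : Sym2 V → ℕ :=
  Sym2.lift ⟨fun u v => ((edgeCloserCount G u v : ℤ) - edgeCloserCount G v u).natAbs,
    fun u v => by dsimp only; omega⟩

/-- The edge Mostar index of a finite graph. -/
noncomputable def emostar (G : SimpleGraph V) [Finite V] : ℕ :=
  letI := Fintype.ofFinite V
  letI := Classical.decEq V
  letI := Classical.decRel G.Adj
  ∑ e ∈ G.edgeFinset, emostarTerm G e

end MostarDefs

/-- The circuit of the graphs `G 0, …, G (n-1)` with respect to the vertices `x i`: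
the vertex `x i` of `G i` is identified with the `i`-th vertex of the cycle `Cₙ`. -/
def circuitGraph (n : ℕ) (V : ℕ → Type*) (G : ∀ i, SimpleGraph (V i)) (x : ∀ i, V i) :
    SimpleGraph ((i : Fin n) × V i.val) where
  Adj p q :=
    (∃ (i : Fin n) (a b : V i.val), (G i.val).Adj a b ∧ p = ⟨i, a⟩ ∧ q = ⟨i, b⟩) ∨
    (p ≠ q ∧ ∃ (i j : Fin n), (i.val + 1) % n = j.val ∧
      ((p = ⟨i, x i.val⟩ ∧ q = ⟨j, x j.val⟩) ∨ (p = ⟨j, x j.val⟩ ∧ q = ⟨i, x i.val⟩)))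
  symm := by
    refine ⟨?_⟩
    rintro p q (⟨i, a, b, h, rfl, rfl⟩ | ⟨hne, i, j, hij, (⟨rfl, rfl⟩ | ⟨rfl, rfl⟩)⟩)
    · exact Or.inl ⟨i, b, a, h.symm, rfl, rfl⟩
    · exact Or.inr ⟨hne.symm, i, j, hij, Or.inr ⟨rfl, rfl⟩⟩
    · exact Or.inr ⟨hne.symm, i, j, hij, Or.inl ⟨rfl, rfl⟩⟩
  loopless := by
    refine ⟨?_⟩
    rintro p (⟨i, a, b, h, rfl, hab⟩ | ⟨hne, _⟩)
    · obtain rfl : a = b := by simpa using hab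
      exact (G i.val).irrefl h
    · exact hne rfl

section CircuitProof

variable {n : ℕ} {V : ℕ → Type*} {G : ∀ i, SimpleGraph (V i)} {x : ∀ i, V i}

/-- successor on `Fin n`. -/
def csucc (i : Fin n) : Fin n := ⟨(i.val + 1) % n, Nat.mod_lt _ ((Nat.zero_le _).trans_lt i.isLt)⟩

lemma csucc_val (i : Fin n) : (csucc i).val = if i.val + 1 = n then 0 else i.val + 1 := by
  have h := i.isLt
  show (i.val + 1) % n = _
  split_ifs with h1
  · rw [h1, Nat.mod_self]
  · exact Nat.mod_eq_of_lt (by omega)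

lemma csucc_ne (hn : 3 ≤ n) (i : Fin n) : csucc i ≠ i := by
  have h1 := csucc_val i
  have h2 := i.isLt
  intro h
  rw [Fin.ext_iff, h1] at h
  split_ifs at h <;> omega

/-- forward cyclic distance -/
def cfwd (i j : Fin n) : ℕ := if i.val ≤ j.val then j.val - i.val else j.val + n - i.val

/-- cyclic distance -/
def ccd (i j : Fin n) : ℕ := min (cfwd i j) (cfwd j i)

lemma cfwd_lt (i j : Fin n) : cfwd i j < n := by
  have := i.isLt; have := j.isLt
  unfold cfwd; split_ifs <;> omega

lemma cfwd_eq_zero_iff (i j : Fin n) : cfwd i j = 0 ↔ i = j := by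
  have := i.isLt; have := j.isLt
  unfold cfwd
  rw [Fin.ext_iff]
  split_ifs <;> omega

lemma cfwd_csucc (hn : 3 ≤ n) (i : Fin n) : cfwd i (csucc i) = 1 := by
  have hs := csucc_val i; have := i.isLt
  unfold cfwd
  rw [hs]
  split_ifs at * <;> omega

lemma cfwd_succ_right (hn : 3 ≤ n) (i j : Fin n) (h : i ≠ csucc j) :
    cfwd i (csucc j) = cfwd i j + 1 := by
  have hs := csucc_val j; have := i.isLt; have := j.isLt
  rw [Ne, Fin.ext_iff, hs] at h
  unfold cfwd
  rw [hs]
  split_ifs at * <;> omega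

lemma csucc_inj (hn : 3 ≤ n) {i j : Fin n} (h : csucc i = csucc j) : i = j := by
  have hi := csucc_val i; have hj := csucc_val j
  have := i.isLt; have := j.isLt
  rw [Fin.ext_iff, hi, hj] at h
  rw [Fin.ext_iff]
  split_ifs at h <;> omega

variable (G x) in
lemma adj_same (hn : 3 ≤ n) {i : Fin n} {a b : V i.val} :
    (circuitGraph n V G x).Adj ⟨i, a⟩ ⟨i, b⟩ ↔ (G i.val).Adj a b := by
  constructor
  · rintro (⟨k, c, d, h, h1, h2⟩ | ⟨hne, k, l, hkl, (⟨h1, h2⟩ | ⟨h1, h2⟩)⟩)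
    · obtain ⟨rfl, h1'⟩ := Sigma.mk.inj_iff.mp h1
      obtain ⟨-, h2'⟩ := Sigma.mk.inj_iff.mp h2
      obtain rfl := eq_of_heq h1'
      obtain rfl := eq_of_heq h2'
      exact h
    all_goals {
      obtain ⟨rfl, -⟩ := Sigma.mk.inj_iff.mp h1
      obtain ⟨rfl, -⟩ := Sigma.mk.inj_iff.mp h2
      exfalso
      have hs := csucc_val i
      have hi := i.isLt
      rw [show ((i:Fin n).val + 1) % n = (csucc i).val from rfl, hs] at hkl
      split_ifs at hkl <;> omega }
  · intro h; exact Or.inl ⟨i, a, b, h, rfl, rfl⟩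

variable (G x) in
lemma adj_cross (hn : 3 ≤ n) {i j : Fin n} (hij : i ≠ j) {a : V i.val} {b : V j.val} :
    (circuitGraph n V G x).Adj ⟨i, a⟩ ⟨j, b⟩ ↔
      (a = x i.val ∧ b = x j.val ∧ (csucc i = j ∨ csucc j = i)) := by
  constructor
  · rintro (⟨k, c, d, h, h1, h2⟩ | ⟨hne, k, l, hkl, (⟨h1, h2⟩ | ⟨h1, h2⟩)⟩)
    · obtain ⟨rfl, -⟩ := Sigma.mk.inj_iff.mp h1
      obtain ⟨rfl, -⟩ := Sigma.mk.inj_iff.mp h2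
      exact absurd rfl hij
    · obtain ⟨rfl, ha⟩ := Sigma.mk.inj_iff.mp h1
      obtain ⟨rfl, hb⟩ := Sigma.mk.inj_iff.mp h2
      exact ⟨eq_of_heq ha, eq_of_heq hb, Or.inl (Fin.ext hkl)⟩
    · obtain ⟨rfl, ha⟩ := Sigma.mk.inj_iff.mp h1
      obtain ⟨rfl, hb⟩ := Sigma.mk.inj_iff.mp h2
      exact ⟨eq_of_heq ha, eq_of_heq hb, Or.inr (Fin.ext hkl)⟩
  · rintro ⟨rfl, rfl, (h | h)⟩
    · exact Or.inr ⟨fun hh => hij (congrArg Sigma.fst hh), i, j,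
        congrArg Fin.val h, Or.inl ⟨rfl, rfl⟩⟩
    · exact Or.inr ⟨fun hh => hij (congrArg Sigma.fst hh), j, i,
        congrArg Fin.val h, Or.inr ⟨rfl, rfl⟩⟩

variable (G x) in
lemma adj_succ_x (hn : 3 ≤ n) (i : Fin n) :
    (circuitGraph n V G x).Adj ⟨i, x i.val⟩ ⟨csucc i, x (csucc i).val⟩ := by
  rw [adj_cross G x hn (csucc_ne hn i).symm]
  exact ⟨rfl, rfl, Or.inl rfl⟩



variable (G x) in
lemma dist_le_block (hn : 3 ≤ n) {i : Fin n} (hc : (G i.val).Connected) (a b : V i.val) :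
    (circuitGraph n V G x).dist ⟨i, a⟩ ⟨i, b⟩ ≤ (G i.val).dist a b := by
  obtain ⟨p, hp⟩ := (hc a b).exists_walk_length_eq_dist
  calc (circuitGraph n V G x).dist ⟨i, a⟩ ⟨i, b⟩
      ≤ (p.map (⟨fun a => ⟨i, a⟩, fun h => (adj_same G x hn).mpr h⟩ : G i.val →g circuitGraph n V G x)).length := dist_le _
  _ = (G i.val).dist a b := by rw [SimpleGraph.Walk.length_map, hp]

variable (G x) in
lemma reachable_block {i : Fin n} (hn : 3 ≤ n) (hc : (G i.val).Connected) (a b : V i.val) :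
    (circuitGraph n V G x).Reachable ⟨i, a⟩ ⟨i, b⟩ := by
  exact ⟨((hc a b).some).map (⟨fun a => ⟨i, a⟩, fun h => (adj_same G x hn).mpr h⟩ : G i.val →g circuitGraph n V G x)⟩

variable (G x) in
lemma walk_block_lower (hn : 3 ≤ n) (hc : ∀ k : Fin n, (G k.val).Connected)
    {P Q : (i : Fin n) × V i.val} (w : (circuitGraph n V G x).Walk P Q)
    (i : Fin n) (b : V i.val) (hQ : Q = ⟨i, b⟩) :
    (∀ a : V i.val, P = ⟨i, a⟩ → (G i.val).dist a b ≤ w.length) ∧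
      (P.1 ≠ i → (G i.val).dist (x i.val) b ≤ w.length) := by
  induction w generalizing i b with
  | nil =>
    subst hQ
    constructor
    · rintro a ha
      obtain ⟨-, ha'⟩ := Sigma.mk.inj_iff.mp ha
      obtain rfl := eq_of_heq ha'
      simp
    · intro hP
      exact absurd rfl hP
  | @cons P M Q h q ih =>
    subst hQ
    obtain ⟨mi, mc⟩ := M
    constructor
    · rintro a rfl
      by_cases hmi : mi = i
      · subst hmi
        have hadj : (G mi.val).Adj a mc := (adj_same G x hn).mp h
        have h1 : (G mi.val).dist a b ≤ (G mi.val).dist a mc + (G mi.val).dist mc b :=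
          (hc mi).dist_triangle
        have h2 : (G mi.val).dist a mc = 1 := dist_eq_one_iff_adj.mpr hadj
        have h3 := (ih mi b rfl).1 mc rfl
        simp only [SimpleGraph.Walk.length_cons]
        omega
      · obtain ⟨rfl, -, -⟩ := (adj_cross G x hn (fun hh => hmi hh.symm)).mp h
        have h3 := (ih i b rfl).2 hmi
        simp only [SimpleGraph.Walk.length_cons]
        omega
    · intro hP
      obtain ⟨pi, pc⟩ := P
      by_cases hmi : mi = i
      · subst hmi
        have hne : pi ≠ mi := hP
        obtain ⟨-, rfl, -⟩ := (adj_cross G x hn hne).mp h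
        have h3 := (ih mi b rfl).1 (x mi.val) rfl
        simp only [SimpleGraph.Walk.length_cons]
        omega
      · have h3 := (ih i b rfl).2 hmi
        simp only [SimpleGraph.Walk.length_cons]
        omega

variable (G x) in
lemma dist_block (hn : 3 ≤ n) (hc : ∀ k : Fin n, (G k.val).Connected) {i : Fin n}
    (a b : V i.val) :
    (circuitGraph n V G x).dist ⟨i, a⟩ ⟨i, b⟩ = (G i.val).dist a b := by
  refine le_antisymm (dist_le_block G x hn (hc i) a b) ?_
  obtain ⟨w, hw⟩ := (reachable_block G x hn (hc i) a b).exists_walk_length_eq_dist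
  rw [← hw]
  exact (walk_block_lower G x hn hc w i b rfl).1 a rfl

variable (G x) in
lemma x_mem_support (hn : 3 ≤ n)
    {P Q : (i : Fin n) × V i.val} (w : (circuitGraph n V G x).Walk P Q)
    (j : Fin n) (hP : P.1 = j) (hQ : Q.1 ≠ j) :
    (⟨j, x j.val⟩ : (i : Fin n) × V i.val) ∈ w.support := by
  induction w with
  | nil => exact absurd hP hQ
  | @cons P M Q h q ih =>
    by_cases hmi : M.1 = j
    · rw [SimpleGraph.Walk.support_cons]
      exact List.mem_cons_of_mem _ (ih hmi hQ)
    · obtain ⟨pi, pc⟩ := P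
      obtain ⟨mi, mc⟩ := M
      obtain rfl : pi = j := hP
      have hne : pi ≠ mi := fun hh => hmi hh.symm
      obtain ⟨rfl, -, -⟩ := (adj_cross G x hn hne).mp h
      exact SimpleGraph.Walk.start_mem_support _


lemma cfwd_succ_left (hn : 3 ≤ n) {i j : Fin n} (h : i ≠ j) :
    cfwd (csucc i) j + 1 = cfwd i j := by
  have hs := csucc_val i; have := i.isLt; have := j.isLt
  rw [Ne, Fin.ext_iff] at h
  unfold cfwd
  rw [hs]
  split_ifs at * <;> omega

variable (G x) in
lemma exists_x_walk (hn : 3 ≤ n) (d : ℕ) (i j : Fin n) (hd : cfwd i j = d) :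
    ∃ w : (circuitGraph n V G x).Walk ⟨i, x i.val⟩ ⟨j, x j.val⟩, w.length ≤ d := by
  induction d generalizing i with
  | zero =>
    obtain rfl := (cfwd_eq_zero_iff i j).mp hd
    exact ⟨SimpleGraph.Walk.nil, le_rfl⟩
  | succ d ih =>
    by_cases hij : i = j
    · subst hij; exact ⟨SimpleGraph.Walk.nil, by simp⟩
    · have h1 : cfwd (csucc i) j = d := by have := cfwd_succ_left hn hij; omega
      obtain ⟨w, hw⟩ := ih (csucc i) h1
      exact ⟨SimpleGraph.Walk.cons (adj_succ_x G x hn i) w, by simp; omega⟩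

variable (G x) in
lemma reachable_x (hn : 3 ≤ n) (i j : Fin n) :
    (circuitGraph n V G x).Reachable ⟨i, x i.val⟩ ⟨j, x j.val⟩ := by
  obtain ⟨w, -⟩ := exists_x_walk G x hn (cfwd i j) i j rfl
  exact ⟨w⟩

variable (G x) in
lemma dist_x_le (hn : 3 ≤ n) (i j : Fin n) :
    (circuitGraph n V G x).dist ⟨i, x i.val⟩ ⟨j, x j.val⟩ ≤ ccd i j := by
  rw [ccd, le_min_iff]
  constructor
  · obtain ⟨w, hw⟩ := exists_x_walk G x hn (cfwd i j) i j rfl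
    exact (SimpleGraph.dist_le w).trans hw
  · obtain ⟨w, hw⟩ := exists_x_walk G x hn (cfwd j i) j i rfl
    refine (SimpleGraph.dist_le w.reverse).trans ?_
    rwa [SimpleGraph.Walk.length_reverse]

variable (G x) in
lemma walk_parity (hn : 3 ≤ n) {P Q : (i : Fin n) × V i.val}
    (w : (circuitGraph n V G x).Walk P Q) :
    ∃ (a b : ℕ) (m : ℤ), a + b ≤ w.length ∧
      ((Q.1.val : ℤ) - P.1.val) = (a : ℤ) - b + n * m := by
  induction w with
  | nil => exact ⟨0, 0, 0, by simp, by simp⟩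
  | @cons P M Q h q ih =>
    obtain ⟨a, b, m, hab, he⟩ := ih
    obtain ⟨pi, pc⟩ := P
    obtain ⟨mi, mc⟩ := M
    simp only [SimpleGraph.Walk.length_cons]
    by_cases hpm : pi = mi
    · subst hpm
      exact ⟨a, b, m, by omega, he⟩
    · obtain ⟨-, -, (hs | hs)⟩ := (adj_cross G x hn hpm).mp h
      · have hv := csucc_val pi
        rw [hs] at hv
        have := pi.isLt
        split_ifs at hv with hcase
        · refine ⟨a + 1, b, m - 1, by omega, ?_⟩
          push_cast
          push_cast at he
          have : (mi.val : ℤ) = 0 := by exact_mod_cast hv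
          have : (pi.val : ℤ) = n - 1 := by omega
          linarith [he]
        · refine ⟨a + 1, b, m, by omega, ?_⟩
          have : (mi.val : ℤ) = pi.val + 1 := by exact_mod_cast hv
          push_cast
          linarith [he]
      · have hv := csucc_val mi
        rw [hs] at hv
        have := mi.isLt
        split_ifs at hv with hcase
        · refine ⟨a, b + 1, m + 1, by omega, ?_⟩
          push_cast
          have : (pi.val : ℤ) = 0 := by exact_mod_cast hv
          have : (mi.val : ℤ) = n - 1 := by omega
          linarith [he]
        · refine ⟨a, b + 1, m, by omega, ?_⟩
          have : (pi.val : ℤ) = mi.val + 1 := by exact_mod_cast hv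
          push_cast
          linarith [he]

lemma ccd_le_of_parity (hn : 3 ≤ n) (i j : Fin n) (L a b : ℕ) (m : ℤ)
    (hab : a + b ≤ L) (he : ((j.val : ℤ)) - i.val = (a : ℤ) - b + n * m) :
    ccd i j ≤ L := by
  have hi := i.isLt; have hj := j.isLt
  rcases le_or_gt n L with h | h
  · exact le_trans (le_of_lt (lt_of_le_of_lt (min_le_left _ _) (cfwd_lt i j))) h
  · have hnpos : (0 : ℤ) < n := by exact_mod_cast (by omega : 0 < n)
    have h2 : (n : ℤ) * m < n * 2 := by push_cast at he ⊢; omega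
    have h3 : (n : ℤ) * (-2) < n * m := by push_cast at he ⊢; omega
    have hm2 : m < 2 := lt_of_mul_lt_mul_left h2 (le_of_lt hnpos)
    have hm3 : (-2 : ℤ) < m := lt_of_mul_lt_mul_left h3 (le_of_lt hnpos)
    interval_cases m <;>
    · simp only [ccd, cfwd, min_le_iff]
      split_ifs <;> push_cast at he <;> omega

variable (G x) in
lemma dist_x (hn : 3 ≤ n) (i j : Fin n) :
    (circuitGraph n V G x).dist ⟨i, x i.val⟩ ⟨j, x j.val⟩ = ccd i j := by
  refine le_antisymm (dist_x_le G x hn i j) ?_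
  obtain ⟨w, hw⟩ := (reachable_x G x hn i j).exists_walk_length_eq_dist
  obtain ⟨a, b, m, hab, he⟩ := walk_parity G x hn w
  rw [← hw]
  exact ccd_le_of_parity hn i j w.length a b m hab he

variable (G x) in
lemma circuit_connected (hn : 3 ≤ n) (hc : ∀ k : Fin n, (G k.val).Connected) :
    (circuitGraph n V G x).Connected := by
  have hne : Nonempty ((i : Fin n) × V i.val) := by
    have : Nonempty (Fin n) := ⟨⟨0, by omega⟩⟩
    obtain ⟨i⟩ := this
    obtain ⟨a⟩ := (hc i).nonempty
    exact ⟨⟨i, a⟩⟩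
  haveI := hne
  refine ⟨?_⟩
  intro P Q
  obtain ⟨pi, pa⟩ := P
  obtain ⟨qi, qa⟩ := Q
  exact ((reachable_block G x hn (hc pi) pa (x pi.val)).trans
    (reachable_x G x hn pi qi)).trans (reachable_block G x hn (hc qi) (x qi.val) qa)

variable (G x) in
lemma dist_cross (hn : 3 ≤ n) (hc : ∀ k : Fin n, (G k.val).Connected)
    (j i : Fin n) (w : V j.val) :
    (circuitGraph n V G x).dist ⟨j, w⟩ ⟨i, x i.val⟩ =
      (G j.val).dist w (x j.val) + ccd j i := by
  classical
  by_cases hji : j = i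
  · subst hji
    have : ccd j j = 0 := by simp [ccd, cfwd]
    rw [this, Nat.add_zero]
    exact dist_block G x hn hc w (x j.val)
  · refine le_antisymm ?_ ?_
    · calc (circuitGraph n V G x).dist ⟨j, w⟩ ⟨i, x i.val⟩
          ≤ (circuitGraph n V G x).dist ⟨j, w⟩ ⟨j, x j.val⟩ +
            (circuitGraph n V G x).dist ⟨j, x j.val⟩ ⟨i, x i.val⟩ :=
        (circuit_connected G x hn hc).dist_triangle
      _ = (G j.val).dist w (x j.val) + ccd j i := by
        rw [dist_block G x hn hc, dist_x G x hn]
    · obtain ⟨p, hp⟩ := (((circuit_connected G x hn hc).preconnected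
        ⟨j, w⟩ ⟨i, x i.val⟩)).exists_walk_length_eq_dist
      have hmem : (⟨j, x j.val⟩ : (i : Fin n) × V i.val) ∈ p.support :=
        x_mem_support G x hn p j rfl (by simpa using fun hh => hji hh.symm)
      have hsplit := congrArg SimpleGraph.Walk.length (p.take_spec hmem)
      rw [SimpleGraph.Walk.length_append] at hsplit
      have h1 : (G j.val).dist w (x j.val) ≤ (p.takeUntil _ hmem).length := by
        rw [← dist_block G x hn hc]
        exact SimpleGraph.dist_le _
      have h2 : ccd j i ≤ (p.dropUntil _ hmem).length := by
        rw [← dist_x G x hn]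
        exact SimpleGraph.dist_le _
      omega


/-- add `t` on `Fin n`. -/
def cadd (t : ℕ) (i : Fin n) : Fin n :=
  ⟨(i.val + t) % n, Nat.mod_lt _ ((Nat.zero_le _).trans_lt i.isLt)⟩

lemma cadd_val {t : ℕ} (ht : t ≤ n) (i : Fin n) :
    (cadd t i).val = if i.val + t < n then i.val + t else i.val + t - n := by
  have hi := i.isLt
  show (i.val + t) % n = _
  split_ifs with h
  · exact Nat.mod_eq_of_lt h
  · rw [Nat.mod_eq_sub_mod (by omega)]
    exact Nat.mod_eq_of_lt (by omega)

lemma ccd_eq (k i : Fin n) : ccd k i = min (cfwd k i) (n - cfwd k i) := by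
  have := k.isLt; have := i.isLt
  simp only [ccd, cfwd]
  split_ifs <;> omega

lemma cfwd_cadd_self {t : ℕ} (ht : 0 < t) (htn : t < n) (i : Fin n) :
    cfwd (cadd t i) i = n - t := by
  have := i.isLt
  have hv := cadd_val (le_of_lt htn) i
  simp only [cfwd]
  rw [hv]
  split_ifs at * <;> omega

lemma cadd_ne_csucc (hn : 3 ≤ n) {t : ℕ} (ht : 2 ≤ t) (htn : t < n) (i : Fin n) :
    cadd t i ≠ csucc i := by
  have := i.isLt
  have hv := cadd_val (le_of_lt htn) i
  have hs := csucc_val i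
  rw [Ne, Fin.ext_iff, hv, hs]
  split_ifs <;> omega

lemma even_classify (hn : 3 ≤ n) {t : ℕ} (ht : n = 2 * t) (i k : Fin n) :
    (cfwd k i < t ∧ ccd k i < ccd k (csucc i)) ∨
      (t ≤ cfwd k i ∧ ccd k (csucc i) < ccd k i) := by
  have hki := k.isLt; have hii := i.isLt
  have e1 := ccd_eq k i
  have e2 := ccd_eq k (csucc i)
  have hd := cfwd_lt k i
  by_cases hk : k = csucc i
  · subst hk
    have h0 : cfwd (csucc i) (csucc i) = 0 := (cfwd_eq_zero_iff _ _).mpr rfl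
    have h1 : cfwd (csucc i) i + cfwd i (csucc i) = n := by
      have hne := csucc_ne hn i
      rw [Ne, Fin.ext_iff] at hne
      have := (csucc i).isLt
      simp only [cfwd]
      split_ifs <;> omega
    have h2 := cfwd_csucc hn i
    omega
  · have h3 := cfwd_succ_right hn k i hk
    omega

lemma even_flip (hn : 3 ≤ n) {t : ℕ} (ht : n = 2 * t) (i k : Fin n) :
    cfwd (cadd t k) i < t ↔ t ≤ cfwd k i := by
  have := k.isLt; have := i.isLt
  have hv := cadd_val (by omega : t ≤ n) k
  simp only [cfwd]
  rw [hv]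
  split_ifs <;> omega

lemma cadd_invol {t : ℕ} (ht : n = 2 * t) (k : Fin n) : cadd t (cadd t k) = k := by
  have := k.isLt
  have hv := cadd_val (by omega : t ≤ n) k
  have hv2 := cadd_val (by omega : t ≤ n) (cadd t k)
  rw [Fin.ext_iff, hv2, hv]
  split_ifs <;> omega

lemma odd_tie (hn : 3 ≤ n) {t : ℕ} (ht : n = 2 * t - 1) (i : Fin n) :
    ccd (cadd t i) i = ccd (cadd t i) (csucc i) := by
  have hii := i.isLt
  have ht2 : 2 ≤ t := by omega
  have htn : t < n := by omega
  have e1 := ccd_eq (cadd t i) i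
  have e2 := ccd_eq (cadd t i) (csucc i)
  have h3 := cfwd_succ_right hn (cadd t i) i (cadd_ne_csucc hn ht2 htn i)
  have h4 := cfwd_cadd_self (by omega : 0 < t) htn i
  omega

-- counting lemmas
lemma nat_card_sigma_subtype [∀ i, Finite (V i)] (P : ((i : Fin n) × V i.val) → Prop) :
    Nat.card {p : (i : Fin n) × V i.val // P p} =
      ∑ k : Fin n, Nat.card {a : V k.val // P ⟨k, a⟩} := by
  classical
  have e : {p : (i : Fin n) × V i.val // P p} ≃ (Σ k : Fin n, {a : V k.val // P ⟨k, a⟩}) :=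
    { toFun := fun p => ⟨p.1.1, p.1.2, p.2⟩
      invFun := fun q => ⟨⟨q.1, q.2.1⟩, q.2.2⟩
      left_inv := fun ⟨⟨k, a⟩, h⟩ => rfl
      right_inv := fun ⟨k, a, h⟩ => rfl }
  letI : ∀ i : ℕ, Fintype (V i) := fun i => Fintype.ofFinite _
  rw [Nat.card_congr e, Nat.card_eq_fintype_card, Fintype.card_sigma]
  exact Finset.sum_congr rfl fun k _ => (Nat.card_eq_fintype_card).symm

lemma nat_card_subtype_add_le {α : Type*} [Finite α] (P Q : α → Prop)
    (h : ∀ a, ¬(P a ∧ Q a)) :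
    Nat.card {a // P a} + Nat.card {a // Q a} ≤ Nat.card α := by
  classical
  letI := Fintype.ofFinite α
  rw [Nat.card_eq_fintype_card, Nat.card_eq_fintype_card, Nat.card_eq_fintype_card,
    Fintype.card_subtype, Fintype.card_subtype]
  rw [← Finset.card_union_of_disjoint]
  · exact Finset.card_le_univ _
  · rw [Finset.disjoint_left]
    intro a ha hb
    rw [Finset.mem_filter] at ha hb
    exact h a ⟨ha.2, hb.2⟩

lemma nat_card_subtype_true {α : Type*} [Finite α] (P : α → Prop) (h : ∀ a, P a) :
    Nat.card {a // P a} = Nat.card α :=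
  Nat.card_congr (Equiv.subtypeUnivEquiv h)

lemma nat_card_subtype_false {α : Type*} (P : α → Prop) (h : ∀ a, ¬ P a) :
    Nat.card {a // P a} = 0 := by
  have : IsEmpty {a // P a} := ⟨fun a => h a.1 a.2⟩
  simp

lemma nat_card_vtx [∀ i, Finite (V i)] :
    Nat.card ((i : Fin n) × V i.val) = ∑ k : Fin n, Nat.card (V k.val) := by
  classical
  letI : ∀ i : ℕ, Fintype (V i) := fun i => Fintype.ofFinite _
  rw [Nat.card_eq_fintype_card, Fintype.card_sigma]
  exact Finset.sum_congr rfl fun k _ => (Nat.card_eq_fintype_card).symm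

lemma sum_transversal {α : Type*} [Fintype α] [DecidableEq α] (σ : α → α)
    (hinv : ∀ a, σ (σ a) = a) (g : α → ℕ) (hg : ∀ a, g (σ a) = g a)
    (A B : Finset α) (hA : ∀ a, a ∈ A ↔ σ a ∉ A) (hB : ∀ a, a ∈ B ↔ σ a ∉ B) :
    ∑ a ∈ A, g a = ∑ a ∈ B, g a := by
  have hinj : Function.Injective σ := Function.LeftInverse.injective hinv
  have key : ∀ C : Finset α, (∀ a, a ∈ C ↔ σ a ∉ C) →
      2 * ∑ a ∈ C, g a = ∑ a : α, g a := by
    intro C hC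
    have himg : C.image σ = Cᶜ := by
      ext a
      simp only [Finset.mem_image, Finset.mem_compl]
      constructor
      · rintro ⟨b, hb, rfl⟩
        exact (hC b).mp hb
      · intro ha
        exact ⟨σ a, (hC (σ a)).mpr (by rwa [hinv]), hinv a⟩
    calc 2 * ∑ a ∈ C, g a = ∑ a ∈ C, g a + ∑ a ∈ C, g (σ a) := by
          rw [two_mul]
          congr 1
          exact (Finset.sum_congr rfl fun a _ => (hg a).symm)
    _ = ∑ a ∈ C, g a + ∑ a ∈ C.image σ, g a := by
          rw [Finset.sum_image (fun a _ b _ h => hinj h)]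
    _ = ∑ a : α, g a := by rw [himg, Finset.sum_add_sum_compl]
  have h1 := key A hA
  have h2 := key B hB
  omega

lemma natAbs_sum_le' {ι : Type*} (s : Finset ι) (f : ι → ℤ) :
    (∑ i ∈ s, f i).natAbs ≤ ∑ i ∈ s, (f i).natAbs := by
  classical
  induction s using Finset.induction with
  | empty => simp
  | insert _ _ h ih =>
    rw [Finset.sum_insert h, Finset.sum_insert h]
    exact le_trans (Int.natAbs_add_le _ _) (by omega)

variable (G x) in
lemma closerCount_circuit_eq_sum [∀ i, Finite (V i)] (u v : (i : Fin n) × V i.val) :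
    closerCount (circuitGraph n V G x) u v =
      ∑ k : Fin n, Nat.card {a : V k.val //
        (circuitGraph n V G x).dist ⟨k, a⟩ u < (circuitGraph n V G x).dist ⟨k, a⟩ v} :=
  nat_card_sigma_subtype _

variable (G x) in
lemma internal_term_le (hn : 3 ≤ n) (hc : ∀ k : Fin n, (G k.val).Connected)
    [∀ i, Finite (V i)] (i : Fin n) (e : Sym2 (V i.val)) :
    mostarTerm (circuitGraph n V G x)
        (e.map (fun a => (⟨i, a⟩ : (i : Fin n) × V i.val))) ≤
      mostarTerm (G i.val) e +
        (Nat.card ((i : Fin n) × V i.val) - Nat.card (V i.val)) := by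
  classical
  induction e using Sym2.ind with
  | _ a b =>
  simp only [Sym2.map_pair_eq, mostarTerm, Sym2.lift_mk]
  have hu := closerCount_circuit_eq_sum G x
    (⟨i, a⟩ : (i : Fin n) × V i.val) (⟨i, b⟩ : (i : Fin n) × V i.val)
  have hv := closerCount_circuit_eq_sum G x
    (⟨i, b⟩ : (i : Fin n) × V i.val) (⟨i, a⟩ : (i : Fin n) × V i.val)
  have hba : Nat.card {c : V i.val // (circuitGraph n V G x).dist ⟨i, c⟩ ⟨i, a⟩ <
      (circuitGraph n V G x).dist ⟨i, c⟩ ⟨i, b⟩} = closerCount (G i.val) a b := by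
    unfold closerCount
    refine Nat.card_congr (Equiv.subtypeEquivRight fun c => ?_)
    rw [dist_block G x hn hc, dist_block G x hn hc]
  have hab : Nat.card {c : V i.val // (circuitGraph n V G x).dist ⟨i, c⟩ ⟨i, b⟩ <
      (circuitGraph n V G x).dist ⟨i, c⟩ ⟨i, a⟩} = closerCount (G i.val) b a := by
    unfold closerCount
    refine Nat.card_congr (Equiv.subtypeEquivRight fun c => ?_)
    rw [dist_block G x hn hc, dist_block G x hn hc]
  have hsplitu := Finset.add_sum_erase Finset.univ (fun k : Fin n =>
    Nat.card {c : V k.val // (circuitGraph n V G x).dist ⟨k, c⟩ ⟨i, a⟩ <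
      (circuitGraph n V G x).dist ⟨k, c⟩ ⟨i, b⟩}) (Finset.mem_univ i)
  have hsplitv := Finset.add_sum_erase Finset.univ (fun k : Fin n =>
    Nat.card {c : V k.val // (circuitGraph n V G x).dist ⟨k, c⟩ ⟨i, b⟩ <
      (circuitGraph n V G x).dist ⟨k, c⟩ ⟨i, a⟩}) (Finset.mem_univ i)
  have hszsplit := Finset.add_sum_erase Finset.univ
    (fun k : Fin n => Nat.card (V k.val)) (Finset.mem_univ i)
  have hN := nat_card_vtx (n := n) (V := V)
  have hbound : ∑ k ∈ Finset.univ.erase i, (Nat.card {c : V k.val //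
        (circuitGraph n V G x).dist ⟨k, c⟩ ⟨i, a⟩ <
          (circuitGraph n V G x).dist ⟨k, c⟩ ⟨i, b⟩} +
      Nat.card {c : V k.val // (circuitGraph n V G x).dist ⟨k, c⟩ ⟨i, b⟩ <
        (circuitGraph n V G x).dist ⟨k, c⟩ ⟨i, a⟩}) ≤
      ∑ k ∈ Finset.univ.erase i, Nat.card (V k.val) := by
    refine Finset.sum_le_sum fun k _ => ?_
    exact nat_card_subtype_add_le _ _ (fun c hc => by omega)
  rw [Finset.sum_add_distrib] at hbound
  omega

variable (G x) in
lemma cycle_term_even (hn : 3 ≤ n) (hc : ∀ k : Fin n, (G k.val).Connected)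
    [∀ i, Finite (V i)] {t : ℕ} (ht : n = 2 * t) (i : Fin n) :
    mostarTerm (circuitGraph n V G x)
        s(⟨i, x i.val⟩, ⟨csucc i, x (csucc i).val⟩) ≤
      ∑ j ∈ Finset.range t, ((Nat.card (V j) : ℤ) - Nat.card (V (t + j))).natAbs := by
  classical
  simp only [mostarTerm, Sym2.lift_mk]
  set sz : Fin n → ℕ := fun k => Nat.card (V k.val) with hsz
  set A : Finset (Fin n) := Finset.univ.filter (fun k => cfwd k i < t) with hA
  have hcu : closerCount (circuitGraph n V G x) ⟨i, x i.val⟩ ⟨csucc i, x (csucc i).val⟩ =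
      ∑ k ∈ A, sz k := by
    rw [closerCount_circuit_eq_sum, ← Finset.sum_filter_add_sum_filter_not Finset.univ
      (fun k => cfwd k i < t)]
    have hz : ∑ k ∈ Finset.univ.filter (fun k : Fin n => ¬ cfwd k i < t),
        Nat.card {a : V k.val // (circuitGraph n V G x).dist ⟨k, a⟩ ⟨i, x i.val⟩ <
          (circuitGraph n V G x).dist ⟨k, a⟩ ⟨csucc i, x (csucc i).val⟩} = 0 := by
      refine Finset.sum_eq_zero fun k hk => ?_
      rw [Finset.mem_filter] at hk
      refine nat_card_subtype_false _ fun c => ?_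
      rw [dist_cross G x hn hc, dist_cross G x hn hc]
      rcases even_classify hn ht i k with ⟨h1, h2⟩ | ⟨h1, h2⟩
      · omega
      · omega
    rw [hz, Nat.add_zero]
    refine Finset.sum_congr rfl fun k hk => ?_
    rw [Finset.mem_filter] at hk
    refine nat_card_subtype_true _ fun c => ?_
    rw [dist_cross G x hn hc, dist_cross G x hn hc]
    rcases even_classify hn ht i k with ⟨h1, h2⟩ | ⟨h1, h2⟩
    · omega
    · omega
  have hcv : closerCount (circuitGraph n V G x) ⟨csucc i, x (csucc i).val⟩ ⟨i, x i.val⟩ =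
      ∑ k ∈ A, sz (cadd t k) := by
    have himg : A.image (cadd t) = Finset.univ.filter (fun k => ¬ cfwd k i < t) := by
      ext k
      simp only [Finset.mem_image, Finset.mem_filter, Finset.mem_univ, true_and, hA]
      constructor
      · rintro ⟨b, hb, rfl⟩
        have := (even_flip hn ht i b).mpr
        have := (even_flip hn ht i b)
        omega
      · intro hk
        refine ⟨cadd t k, ?_, cadd_invol ht k⟩
        have := even_flip hn ht i (cadd t k)
        rw [cadd_invol ht k] at this
        omega
    rw [closerCount_circuit_eq_sum, ← Finset.sum_filter_add_sum_filter_not Finset.univ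
      (fun k => cfwd k i < t)]
    have hz : ∑ k ∈ Finset.univ.filter (fun k => cfwd k i < t),
        Nat.card {a : V k.val // (circuitGraph n V G x).dist ⟨k, a⟩ ⟨csucc i, x (csucc i).val⟩ <
          (circuitGraph n V G x).dist ⟨k, a⟩ ⟨i, x i.val⟩} = 0 := by
      refine Finset.sum_eq_zero fun k hk => ?_
      rw [Finset.mem_filter] at hk
      refine nat_card_subtype_false _ fun c => ?_
      rw [dist_cross G x hn hc, dist_cross G x hn hc]
      rcases even_classify hn ht i k with ⟨-, h⟩ | ⟨h, -⟩
      · omega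
      · omega
    rw [hz, Nat.zero_add, ← himg, Finset.sum_image (fun a _ b _ h =>
      Function.LeftInverse.injective (cadd_invol ht) h)]
    refine Finset.sum_congr rfl fun k hk => ?_
    rw [Finset.mem_filter] at hk
    refine nat_card_subtype_true _ fun c => ?_
    rw [dist_cross G x hn hc, dist_cross G x hn hc]
    have hkA : cfwd k i < t := hk.2
    have := even_flip hn ht i k
    rcases even_classify hn ht i (cadd t k) with ⟨h1, h2⟩ | ⟨h1, h2⟩
    · omega
    · omega
  rw [hcu, hcv]
  set g : Fin n → ℕ := fun k => ((sz k : ℤ) - sz (cadd t k)).natAbs with hg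
  have step1 : ((∑ k ∈ A, sz k : ℕ) - (∑ k ∈ A, sz (cadd t k) : ℕ) : ℤ).natAbs ≤
      ∑ k ∈ A, g k := by
    push_cast
    rw [← Finset.sum_sub_distrib]
    exact natAbs_sum_le' _ _
  refine le_trans step1 ?_
  have step2 : ∑ k ∈ A, g k = ∑ k ∈ Finset.univ.filter (fun k : Fin n => k.val < t), g k := by
    refine sum_transversal (cadd t) (cadd_invol ht) g ?_ A _ ?_ ?_
    · intro k
      simp only [hg]
      rw [cadd_invol ht]
      omega
    · intro k
      simp only [hA, Finset.mem_filter, Finset.mem_univ, true_and]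
      have := even_flip hn ht i k
      omega
    · intro k
      simp only [Finset.mem_filter, Finset.mem_univ, true_and]
      have := k.isLt
      rw [cadd_val (by omega : t ≤ n) k]
      split_ifs <;> omega
  rw [step2]
  refine le_of_eq (Finset.sum_bij (fun (k : Fin n) _ => k.val) ?_ ?_ ?_ ?_)
  · intro k hk
    rw [Finset.mem_filter] at hk
    rw [Finset.mem_range]
    exact hk.2
  · intro k _ l _ h
    exact Fin.ext h
  · intro j hj
    rw [Finset.mem_range] at hj
    exact ⟨⟨j, by omega⟩, by simp [hj], rfl⟩
  · intro k hk
    rw [Finset.mem_filter] at hk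
    have hv : (cadd t k).val = t + k.val := by
      rw [cadd_val (by omega : t ≤ n)]
      have := k.isLt
      split_ifs <;> omega
    simp only [hg, hsz, hv]

variable (G x) in
lemma cycle_term_odd (hn : 3 ≤ n) (hc : ∀ k : Fin n, (G k.val).Connected)
    [∀ i, Finite (V i)] {t : ℕ} (ht : n = 2 * t - 1) (i : Fin n) :
    mostarTerm (circuitGraph n V G x)
        s(⟨i, x i.val⟩, ⟨csucc i, x (csucc i).val⟩) ≤
      Nat.card ((i : Fin n) × V i.val) - Nat.card (V ((cadd t i).val)) := by
  classical
  simp only [mostarTerm, Sym2.lift_mk]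
  have hN := nat_card_vtx (n := n) (V := V)
  have hu := closerCount_circuit_eq_sum G x
    (⟨i, x i.val⟩ : (i : Fin n) × V i.val) (⟨csucc i, x (csucc i).val⟩ : (i : Fin n) × V i.val)
  have hv := closerCount_circuit_eq_sum G x
    (⟨csucc i, x (csucc i).val⟩ : (i : Fin n) × V i.val) (⟨i, x i.val⟩ : (i : Fin n) × V i.val)
  have hbound : ∀ k : Fin n,
      Nat.card {a : V k.val // (circuitGraph n V G x).dist ⟨k, a⟩ ⟨i, x i.val⟩ <
        (circuitGraph n V G x).dist ⟨k, a⟩ ⟨csucc i, x (csucc i).val⟩} +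
      Nat.card {a : V k.val // (circuitGraph n V G x).dist ⟨k, a⟩ ⟨csucc i, x (csucc i).val⟩ <
        (circuitGraph n V G x).dist ⟨k, a⟩ ⟨i, x i.val⟩} ≤
      (if k = cadd t i then 0 else Nat.card (V k.val)) := by
    intro k
    by_cases hk : k = cadd t i
    · subst hk
      have htie := odd_tie hn ht i
      rw [if_pos rfl]
      have z1 : Nat.card {a : V (cadd t i).val //
          (circuitGraph n V G x).dist ⟨cadd t i, a⟩ ⟨i, x i.val⟩ <
          (circuitGraph n V G x).dist ⟨cadd t i, a⟩ ⟨csucc i, x (csucc i).val⟩} = 0 := by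
        refine nat_card_subtype_false _ fun c => ?_
        rw [dist_cross G x hn hc, dist_cross G x hn hc]
        omega
      have z2 : Nat.card {a : V (cadd t i).val //
          (circuitGraph n V G x).dist ⟨cadd t i, a⟩ ⟨csucc i, x (csucc i).val⟩ <
          (circuitGraph n V G x).dist ⟨cadd t i, a⟩ ⟨i, x i.val⟩} = 0 := by
        refine nat_card_subtype_false _ fun c => ?_
        rw [dist_cross G x hn hc, dist_cross G x hn hc]
        omega
      omega
    · rw [if_neg hk]
      exact nat_card_subtype_add_le _ _ (fun c hcc => by omega)
  have hsum : ∑ k : Fin n, (if k = cadd t i then 0 else Nat.card (V k.val)) +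
      Nat.card (V ((cadd t i).val)) ≤ Nat.card ((i : Fin n) × V i.val) := by
    rw [hN]
    have h1 := Finset.add_sum_erase Finset.univ
      (fun k : Fin n => if k = cadd t i then 0 else Nat.card (V k.val))
      (Finset.mem_univ (cadd t i))
    have h2 := Finset.add_sum_erase Finset.univ
      (fun k : Fin n => Nat.card (V k.val)) (Finset.mem_univ (cadd t i))
    have h3 : ∑ k ∈ Finset.univ.erase (cadd t i),
        (if k = cadd t i then 0 else Nat.card (V k.val)) =
        ∑ k ∈ Finset.univ.erase (cadd t i), Nat.card (V k.val) := by
      refine Finset.sum_congr rfl fun k hk => ?_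
      rw [if_neg (Finset.ne_of_mem_erase hk)]
    rw [if_pos rfl] at h1
    omega
  have htotal : closerCount (circuitGraph n V G x) ⟨i, x i.val⟩ ⟨csucc i, x (csucc i).val⟩ +
      closerCount (circuitGraph n V G x) ⟨csucc i, x (csucc i).val⟩ ⟨i, x i.val⟩ ≤
      ∑ k : Fin n, (if k = cadd t i then 0 else Nat.card (V k.val)) := by
    rw [hu, hv, ← Finset.sum_add_distrib]
    exact Finset.sum_le_sum fun k _ => hbound k
  omega


lemma csucc_csucc_ne (hn : 3 ≤ n) (j : Fin n) : csucc (csucc j) ≠ j := by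
  have h1 := csucc_val j
  have h2 := csucc_val (csucc j)
  have := j.isLt
  intro h
  rw [Fin.ext_iff, h2, h1] at h
  split_ifs at h <;> omega

lemma sum_union_le_nat {α : Type*} [DecidableEq α] (s t : Finset α) (f : α → ℕ) :
    ∑ a ∈ s ∪ t, f a ≤ ∑ a ∈ s, f a + ∑ a ∈ t, f a := by
  have := Finset.sum_union_inter (s₁ := s) (s₂ := t) (f := f)
  omega

lemma sum_biUnion_le_nat {α β : Type*} [DecidableEq β] (s : Finset α) (t : α → Finset β)
    (f : β → ℕ) : ∑ b ∈ s.biUnion t, f b ≤ ∑ a ∈ s, ∑ b ∈ t a, f b := by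
  classical
  induction s using Finset.induction with
  | empty => simp
  | @insert a s h ih =>
    rw [Finset.biUnion_insert, Finset.sum_insert h]
    exact (sum_union_le_nat _ _ _).trans (by omega)

lemma mostar_eq_sum {W : Type*} [Fintype W] [DecidableEq W] (H : SimpleGraph W)
    [DecidableRel H.Adj] :
    mostar H = ∑ e ∈ H.edgeFinset, mostarTerm H e := by
  rw [mostar]
  apply Finset.sum_congr
  · ext e
    simp only [SimpleGraph.mem_edgeFinset]
  · intros; rfl

lemma card_edgeSet_eq {W : Type*} [Fintype W] [DecidableEq W] (H : SimpleGraph W)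
    [DecidableRel H.Adj] :
    Nat.card H.edgeSet = H.edgeFinset.card := by
  rw [Nat.card_coe_set_eq, SimpleGraph.edgeFinset, Set.ncard_eq_toFinset_card']

variable (G x) in
lemma edgeFinset_subset (hn : 3 ≤ n) [∀ i, Finite (V i)]
    [Fintype ((i : Fin n) × V i.val)] [DecidableEq ((i : Fin n) × V i.val)]
    [DecidableRel (circuitGraph n V G x).Adj] [∀ i : ℕ, Fintype (V i)]
    [∀ i : ℕ, DecidableRel (G i).Adj] :
    (circuitGraph n V G x).edgeFinset ⊆
      (Finset.univ.biUnion (fun i : Fin n => ((G i.val).edgeFinset).image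
        (Sym2.map (fun a => (⟨i, a⟩ : (i : Fin n) × V i.val))))) ∪
      (Finset.univ.image (fun i : Fin n =>
        s((⟨i, x i.val⟩ : (i : Fin n) × V i.val), ⟨csucc i, x (csucc i).val⟩))) := by
  intro e he
  induction e using Sym2.ind with
  | _ p q =>
  rw [SimpleGraph.mem_edgeFinset, SimpleGraph.mem_edgeSet] at he
  rw [Finset.mem_union]
  obtain ⟨pi, pa⟩ := p
  obtain ⟨qi, qa⟩ := q
  by_cases hpq : pi = qi
  · subst hpq
    left
    rw [Finset.mem_biUnion]
    refine ⟨pi, Finset.mem_univ _, ?_⟩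
    rw [Finset.mem_image]
    refine ⟨s(pa, qa), ?_, by rw [Sym2.map_pair_eq]⟩
    rw [SimpleGraph.mem_edgeFinset, SimpleGraph.mem_edgeSet]
    exact (adj_same G x hn).mp he
  · right
    obtain ⟨rfl, rfl, (hs | hs)⟩ := (adj_cross G x hn hpq).mp he
    · rw [Finset.mem_image]
      exact ⟨pi, Finset.mem_univ _, by rw [hs]⟩
    · rw [Finset.mem_image]
      refine ⟨qi, Finset.mem_univ _, ?_⟩
      rw [hs, Sym2.eq_swap]

end CircuitProof

theorem mostar_circuitGraph_le (n : ℕ) (hn : 3 ≤ n) (V : ℕ → Type*) [∀ i, Finite (V i)]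
    (G : ∀ i, SimpleGraph (V i)) (hconn : ∀ i < n, (G i).Connected) (x : ∀ i, V i) :
    (∀ t : ℕ, n = 2 * t →
      mostar (circuitGraph n V G x) ≤
        (∑ i ∈ range n, mostar (G i)) +
        (∑ i ∈ range n, Nat.card (G i).edgeSet *
          (Nat.card ((i : Fin n) × V i.val) - Nat.card (V i))) +
        n * ∑ i ∈ range t, ((Nat.card (V i) : ℤ) - Nat.card (V (t + i))).natAbs) ∧
    (∀ t : ℕ, n = 2 * t - 1 →
      mostar (circuitGraph n V G x) ≤
        (∑ i ∈ range n, mostar (G i)) +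
        (∑ i ∈ range n, Nat.card (G i).edgeSet *
          (Nat.card ((i : Fin n) × V i.val) - Nat.card (V i))) +
        (n - 1) * Nat.card ((i : Fin n) × V i.val)) := by
  classical
  letI : ∀ i : ℕ, Fintype (V i) := fun i => Fintype.ofFinite _
  letI : ∀ i : ℕ, DecidableRel (G i).Adj := fun i => Classical.decRel _
  letI : DecidableRel (circuitGraph n V G x).Adj := Classical.decRel _
  have hc : ∀ k : Fin n, (G k.val).Connected := fun k => hconn k.val k.isLt
  set N := Nat.card ((i : Fin n) × V i.val) with hNdef
  -- the key common bound
  have key : mostar (circuitGraph n V G x) ≤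
      (∑ i ∈ range n, mostar (G i)) +
      (∑ i ∈ range n, Nat.card (G i).edgeSet * (N - Nat.card (V i))) +
      ∑ i : Fin n, mostarTerm (circuitGraph n V G x)
        s((⟨i, x i.val⟩ : (i : Fin n) × V i.val), ⟨csucc i, x (csucc i).val⟩) := by
    rw [mostar_eq_sum]
    refine le_trans (Finset.sum_le_sum_of_subset (edgeFinset_subset G x hn)) ?_
    refine le_trans (sum_union_le_nat _ _ _) ?_
    have hint : ∑ e ∈ Finset.univ.biUnion (fun i : Fin n => ((G i.val).edgeFinset).image
          (Sym2.map (fun a => (⟨i, a⟩ : (i : Fin n) × V i.val)))),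
          mostarTerm (circuitGraph n V G x) e ≤
        (∑ i ∈ range n, mostar (G i)) +
        (∑ i ∈ range n, Nat.card (G i).edgeSet * (N - Nat.card (V i))) := by
      refine le_trans (sum_biUnion_le_nat _ _ _) ?_
      have hone : ∀ i : Fin n, ∑ e ∈ ((G i.val).edgeFinset).image
            (Sym2.map (fun a => (⟨i, a⟩ : (i : Fin n) × V i.val))),
            mostarTerm (circuitGraph n V G x) e ≤
          mostar (G i.val) + Nat.card (G i.val).edgeSet * (N - Nat.card (V i.val)) := by
        intro i
        rw [Finset.sum_image (fun a _ b _ h => Sym2.map.injective sigma_mk_injective h)]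
        refine le_trans (Finset.sum_le_sum (fun e _ => internal_term_le G x hn hc i e)) ?_
        rw [Finset.sum_add_distrib, Finset.sum_const, smul_eq_mul]
        rw [mostar_eq_sum, card_edgeSet_eq]
      refine le_trans (Finset.sum_le_sum (fun i _ => hone i)) ?_
      rw [Finset.sum_add_distrib]
      have h1 : ∑ i : Fin n, mostar (G i.val) = ∑ i ∈ range n, mostar (G i) :=
        Fin.sum_univ_eq_sum_range (fun j => mostar (G j)) n
      have h2 : ∑ i : Fin n, Nat.card (G i.val).edgeSet * (N - Nat.card (V i.val)) =
          ∑ i ∈ range n, Nat.card (G i).edgeSet * (N - Nat.card (V i)) :=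
        Fin.sum_univ_eq_sum_range (fun j => Nat.card (G j).edgeSet * (N - Nat.card (V j))) n
      omega
    have hcyc : ∑ e ∈ Finset.univ.image (fun i : Fin n =>
          s((⟨i, x i.val⟩ : (i : Fin n) × V i.val), ⟨csucc i, x (csucc i).val⟩)),
          mostarTerm (circuitGraph n V G x) e ≤
        ∑ i : Fin n, mostarTerm (circuitGraph n V G x)
          s((⟨i, x i.val⟩ : (i : Fin n) × V i.val), ⟨csucc i, x (csucc i).val⟩) := by
      refine le_of_eq (Finset.sum_image ?_)
      intro a _ b _ h
      rw [Sym2.eq_iff] at h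
      rcases h with ⟨h1, -⟩ | ⟨h1, h2⟩
      · exact congrArg Sigma.fst h1
      · exfalso
        have e1 : a = csucc b := congrArg Sigma.fst h1
        have e2 : csucc a = b := congrArg Sigma.fst h2
        rw [e1] at e2
        exact csucc_csucc_ne hn b e2
    omega
  constructor
  · -- even case
    intro t ht
    refine le_trans key ?_
    have hbound : ∀ i : Fin n, mostarTerm (circuitGraph n V G x)
          s((⟨i, x i.val⟩ : (i : Fin n) × V i.val), ⟨csucc i, x (csucc i).val⟩) ≤
        ∑ j ∈ range t, ((Nat.card (V j) : ℤ) - Nat.card (V (t + j))).natAbs :=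
      fun i => cycle_term_even G x hn hc ht i
    have hsum : ∑ i : Fin n, mostarTerm (circuitGraph n V G x)
          s((⟨i, x i.val⟩ : (i : Fin n) × V i.val), ⟨csucc i, x (csucc i).val⟩) ≤
        n * ∑ j ∈ range t, ((Nat.card (V j) : ℤ) - Nat.card (V (t + j))).natAbs := by
      refine le_trans (Finset.sum_le_sum (fun i _ => hbound i)) ?_
      rw [Finset.sum_const, Finset.card_univ, Fintype.card_fin, smul_eq_mul]
    omega
  · -- odd case
    intro t ht
    refine le_trans key ?_
    have ht2 : 2 ≤ t := by omega
    have htn : t ≤ n := by omega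
    have hbound : ∀ i : Fin n, mostarTerm (circuitGraph n V G x)
          s((⟨i, x i.val⟩ : (i : Fin n) × V i.val), ⟨csucc i, x (csucc i).val⟩) ≤
        N - Nat.card (V ((cadd t i).val)) :=
      fun i => cycle_term_odd G x hn hc ht i
    have hb : Function.Bijective (cadd t : Fin n → Fin n) := by
      refine Finite.injective_iff_bijective.mp ?_
      intro k l h
      have hk := k.isLt; have hl := l.isLt
      rw [Fin.ext_iff, cadd_val htn, cadd_val htn] at h
      rw [Fin.ext_iff]
      split_ifs at h <;> omega
    have hsum2 : ∑ i : Fin n, Nat.card (V ((cadd t i).val)) =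
        ∑ i : Fin n, Nat.card (V i.val) :=
      Fintype.sum_bijective _ hb _ _ (fun i => rfl)
    have hN : N = ∑ k : Fin n, Nat.card (V k.val) := nat_card_vtx
    have hle : ∀ i : Fin n, Nat.card (V ((cadd t i).val)) ≤ N := by
      intro i
      rw [hN]
      exact Finset.single_le_sum (f := fun k : Fin n => Nat.card (V k.val))
        (fun k _ => Nat.zero_le _) (Finset.mem_univ (cadd t i))
    have hsplit : ∑ i : Fin n, (N - Nat.card (V ((cadd t i).val))) +
        ∑ i : Fin n, Nat.card (V ((cadd t i).val)) = n * N := by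
      rw [← Finset.sum_add_distrib]
      have : ∀ i : Fin n, (N - Nat.card (V ((cadd t i).val))) +
          Nat.card (V ((cadd t i).val)) = N := fun i => by have := hle i; omega
      rw [Finset.sum_congr rfl (fun i _ => this i), Finset.sum_const, Finset.card_univ,
        Fintype.card_fin, smul_eq_mul]
    have hmul : n * N = (n - 1) * N + N := by
      obtain ⟨m, rfl⟩ : ∃ m, n = m + 1 := ⟨n - 1, by omega⟩
      simp [Nat.add_sub_cancel, add_mul]
    have hs : ∑ i : Fin n, mostarTerm (circuitGraph n V G x)
          s((⟨i, x i.val⟩ : (i : Fin n) × V i.val), ⟨csucc i, x (csucc i).val⟩) ≤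
        ∑ i : Fin n, (N - Nat.card (V ((cadd t i).val))) :=
      Finset.sum_le_sum (fun i _ => hbound i)
    omega
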